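/- With notation as above, if g = n·a(t₀)·m·k(α,β) ∈ U(2,1) (Iwasawa decomposition with SU(2)-parametrized K₀/M-component), then ∂/∂t A(g·a(t))|_{t=0} = Re(α), ∂/∂τ A(g·n(0,τ))|_{τ=0} = Im(α), ∂/∂x A(g·n(x,0))|_{x=0} = 2Re(β), and ∂/∂y A(g·n(iy,0))|_{y=0} = 2Im(β). -/

import Mathlib

open Matrix Complex

noncomputable section

def Jmat : Matrix (Fin 3) (Fin 3) ℂ := !![0,0,1;0,1,0;1,0,0]

def nmat (z : ℂ) (τ : ℝ) : Matrix (Fin 3) (Fin 3) ℂ :=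
  !![1, (Real.sqrt 2 : ℂ) * z, (τ : ℂ) * I - (normSq z : ℂ);
     0, 1, -(Real.sqrt 2 : ℂ) * starRingEnd ℂ z;
     0, 0, 1]

def amat (t : ℝ) : Matrix (Fin 3) (Fin 3) ℂ :=
  !![(Real.exp (t/2) : ℂ), 0, 0; 0, 1, 0; 0, 0, (Real.exp (-t/2) : ℂ)]

def kmat (α β : ℂ) : Matrix (Fin 3) (Fin 3) ℂ :=
  !![(α+1)/2, β/(Real.sqrt 2 : ℂ), (α-1)/2;
     -(starRingEnd ℂ β)/(Real.sqrt 2 : ℂ), starRingEnd ℂ α, -(starRingEnd ℂ β)/(Real.sqrt 2 : ℂ);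
     (α-1)/2, β/(Real.sqrt 2 : ℂ), (α+1)/2]

def U21 : Set (Matrix (Fin 3) (Fin 3) ℂ) := {g | gᴴ * Jmat * g = Jmat}

def Nset : Set (Matrix (Fin 3) (Fin 3) ℂ) := {x | ∃ z τ, x = nmat z τ}

def K0 : Set (Matrix (Fin 3) (Fin 3) ℂ) := {g | gᴴ * Jmat * g = Jmat ∧ gᴴ * g = 1}

/-- The centralizer M of A in K₀. -/
def Mset : Set (Matrix (Fin 3) (Fin 3) ℂ) := {m | m ∈ K0 ∧ ∀ t : ℝ, m * amat t = amat t * m}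

/-! ### Auxiliary lemmas -/

lemma sq2 : ((Real.sqrt 2 : ℝ) : ℂ) * ((Real.sqrt 2 : ℝ) : ℂ) = 2 := by
  have h : (Real.sqrt 2) * (Real.sqrt 2) = 2 := Real.mul_self_sqrt (by norm_num)
  exact_mod_cast h

lemma nmat_mem (z : ℂ) (τ : ℝ) : nmat z τ ∈ U21 := by
  simp only [U21, Set.mem_setOf_eq]
  ext i j
  fin_cases i <;> fin_cases j <;>
    simp [nmat, Jmat, Matrix.mul_apply, Fin.sum_univ_three, conjTranspose_apply,
      Matrix.vecHead, Matrix.vecTail, Complex.conj_I, Complex.conj_ofReal] <;>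
    ring_nf <;>
    simp [sq, sq2] <;> linear_combination (2:ℂ) * Complex.mul_conj z

lemma amat_mem (t : ℝ) : amat t ∈ U21 := by
  simp only [U21, Set.mem_setOf_eq]
  ext i j
  fin_cases i <;> fin_cases j <;>
    simp [amat, Jmat, Matrix.mul_apply, Fin.sum_univ_three, conjTranspose_apply,
      Matrix.vecHead, Matrix.vecTail, -Complex.ofReal_exp,
      Complex.conj_ofReal, ← Complex.ofReal_mul, ← Real.exp_add] <;> ring_nf

lemma U21_mul {a b : Matrix (Fin 3) (Fin 3) ℂ} (ha : a ∈ U21) (hb : b ∈ U21) : a * b ∈ U21 := by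
  simp only [U21, Set.mem_setOf_eq] at *
  rw [conjTranspose_mul,
    show bᴴ * aᴴ * Jmat * (a * b) = bᴴ * (aᴴ * Jmat * a) * b by simp only [Matrix.mul_assoc],
    ha, hb]

lemma row2_formula (AA : Matrix (Fin 3) (Fin 3) ℂ → ℝ)
    (κ : Matrix (Fin 3) (Fin 3) ℂ → Matrix (Fin 3) (Fin 3) ℂ)
    (hdec : ∀ g ∈ U21, κ g ∈ K0 ∧ ∃ n ∈ Nset, g = n * amat (AA g) * κ g)
    {h : Matrix (Fin 3) (Fin 3) ℂ} (hh : h ∈ U21) :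
    Real.exp (-(AA h)) = normSq (h 2 0) + normSq (h 2 1) + normSq (h 2 2) := by
  obtain ⟨hk, n, hn, hhd⟩ := hdec h hh
  obtain ⟨z, τ, rfl⟩ := hn
  have hrow : ∀ j, h 2 j = (Real.exp (-(AA h)/2) : ℂ) * κ h 2 j := by
    intro j
    conv_lhs => rw [hhd]
    simp [Matrix.mul_apply, nmat, amat, Fin.sum_univ_three, Matrix.vecHead, Matrix.vecTail,
      -Complex.ofReal_exp]
  have hK : κ h * (κ h)ᴴ = 1 := by
    rw [mul_eq_one_comm]; exact hk.2
  have hsum : normSq (κ h 2 0) + normSq (κ h 2 1) + normSq (κ h 2 2) = 1 := by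
    have h22 := congrFun (congrFun hK 2) 2
    simp [Matrix.mul_apply, Fin.sum_univ_three, conjTranspose_apply, Matrix.one_apply,
      Complex.mul_conj] at h22
    exact_mod_cast h22
  rw [hrow 0, hrow 1, hrow 2]
  simp only [Complex.normSq_mul, Complex.normSq_ofReal]
  have : Real.exp (-AA h / 2) * Real.exp (-AA h / 2) = Real.exp (-(AA h)) := by
    rw [← Real.exp_add]; ring_nf
  nlinarith [hsum, this]

lemma rexp_ne {a b : ℝ} (hab : a ≠ b) : Complex.exp (a:ℂ) ≠ Complex.exp (b:ℂ) := by
  intro hE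
  apply hab
  have : Real.exp a = Real.exp b := by exact_mod_cast hE
  exact Real.exp_injective this

section Mlem
variable {m : Matrix (Fin 3) (Fin 3) ℂ} (hm : m ∈ Mset)
include hm

lemma m20 : m 2 0 = 0 := by
  have h := congrFun (congrFun (hm.2 2) 2) 0
  simp [Matrix.mul_apply, amat, Fin.sum_univ_three, Matrix.vecHead, Matrix.vecTail] at h
  norm_num at h
  have h2 : m 2 0 * (Complex.exp 1 - Complex.exp (-1)) = 0 := by linear_combination h
  rcases mul_eq_zero.1 h2 with h3 | h3
  · exact h3
  · exact absurd (sub_eq_zero.1 h3)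
      (by simpa using rexp_ne (by norm_num : (1:ℝ) ≠ -1))

lemma m21 : m 2 1 = 0 := by
  have h := congrFun (congrFun (hm.2 2) 2) 1
  simp [Matrix.mul_apply, amat, Fin.sum_univ_three, Matrix.vecHead, Matrix.vecTail] at h
  have h2 : m 2 1 * ((1:ℂ) - Complex.exp (-1)) = 0 := by linear_combination h
  rcases mul_eq_zero.1 h2 with h3 | h3
  · exact h3
  · exfalso
    have h4 : (Complex.exp (-1) : ℂ) = 1 := by linear_combination -h3
    have h5 : Complex.exp ((-1:ℝ):ℂ) = Complex.exp ((0:ℝ):ℂ) := by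
      push_cast; simpa [Complex.exp_zero] using h4
    exact rexp_ne (by norm_num : (-1:ℝ) ≠ 0) h5

lemma m02 : m 0 2 = 0 := by
  have h := congrFun (congrFun (hm.2 2) 0) 2
  simp [Matrix.mul_apply, amat, Fin.sum_univ_three, Matrix.vecHead, Matrix.vecTail] at h
  norm_num at h
  have h2 : m 0 2 * (Complex.exp (-1) - Complex.exp 1) = 0 := by linear_combination h
  rcases mul_eq_zero.1 h2 with h3 | h3
  · exact h3
  · exact absurd (sub_eq_zero.1 h3)
      (by simpa using rexp_ne (by norm_num : (-1:ℝ) ≠ 1))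

lemma m12 : m 1 2 = 0 := by
  have h := congrFun (congrFun (hm.2 2) 1) 2
  simp [Matrix.mul_apply, amat, Fin.sum_univ_three, Matrix.vecHead, Matrix.vecTail] at h
  have h2 : m 1 2 * (Complex.exp (-1) - 1) = 0 := by linear_combination h
  rcases mul_eq_zero.1 h2 with h3 | h3
  · exact h3
  · exfalso
    have h4 : (Complex.exp (-1) : ℂ) = 1 := by linear_combination h3
    have h5 : Complex.exp ((-1:ℝ):ℂ) = Complex.exp ((0:ℝ):ℂ) := by
      push_cast; simpa [Complex.exp_zero] using h4
    exact rexp_ne (by norm_num : (-1:ℝ) ≠ 0) h5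

lemma m22_normSq : normSq (m 2 2) = 1 := by
  have h := congrFun (congrFun hm.1.2 2) 2
  simp [Matrix.mul_apply, Fin.sum_univ_three, conjTranspose_apply, Matrix.one_apply,
    m02 hm, m12 hm] at h
  have h2 : (normSq (m 2 2) : ℂ) = 1 := by
    rw [Complex.normSq_eq_conj_mul_self]; exact h
  exact_mod_cast h2

end Mlem

lemma g_row {g n₀ m : Matrix (Fin 3) (Fin 3) ℂ} {t₀ : ℝ} {α β : ℂ}
    (hdecg : g = n₀ * amat t₀ * m * kmat α β) (hn₀ : n₀ ∈ Nset) (hm : m ∈ Mset) :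
    ∀ j, g 2 j = ((Real.exp (-t₀/2) : ℂ) * m 2 2) * kmat α β 2 j := by
  obtain ⟨z₀, τ₀, rfl⟩ := hn₀
  intro j
  rw [hdecg]
  simp [Matrix.mul_apply, nmat, amat, Fin.sum_univ_three, Matrix.vecHead, Matrix.vecTail,
    Matrix.vecMul, dotProduct, m20 hm, m21 hm, -Complex.ofReal_exp]

lemma hasDerivAt_ofReal (s : ℝ) : HasDerivAt (fun x : ℝ => (x:ℂ)) 1 s := by
  simpa using (hasDerivAt_id s).ofReal_comp

lemma hasDerivAt_normSq {f : ℝ → ℂ} {f' : ℂ} {s : ℝ} (hf : HasDerivAt f f' s) :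
    HasDerivAt (fun x => normSq (f x)) (2 * ((starRingEnd ℂ) (f s) * f').re) s := by
  have h1 : HasDerivAt (fun x => (f x).re) f'.re s :=
    Complex.reCLM.hasFDerivAt.comp_hasDerivAt s hf
  have h2 : HasDerivAt (fun x => (f x).im) f'.im s :=
    Complex.imCLM.hasFDerivAt.comp_hasDerivAt s hf
  have h := (h1.mul h1).add (h2.mul h2)
  have e : (fun x => normSq (f x)) = ((fun x => (f x).re) * fun x => (f x).re)
      + (fun x => (f x).im) * fun x => (f x).im := by
    funext x; simp [Complex.normSq_apply]
  rw [e]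
  refine h.congr_deriv ?_
  simp [Complex.mul_re, Complex.conj_re, Complex.conj_im]
  ring

lemma gmul_n20 {g : Matrix (Fin 3) (Fin 3) ℂ} (z : ℂ) (τ : ℝ) :
    (g * nmat z τ) 2 0 = g 2 0 := by
  simp [Matrix.mul_apply, nmat, Fin.sum_univ_three, Matrix.vecHead, Matrix.vecTail]

lemma gmul_n21 {g : Matrix (Fin 3) (Fin 3) ℂ} (z : ℂ) (τ : ℝ) :
    (g * nmat z τ) 2 1 = g 2 1 + ((Real.sqrt 2:ℝ) : ℂ) * z * g 2 0 := by
  simp [Matrix.mul_apply, nmat, Fin.sum_univ_three, Matrix.vecHead, Matrix.vecTail]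
  ring

lemma gmul_n22 {g : Matrix (Fin 3) (Fin 3) ℂ} (z : ℂ) (τ : ℝ) :
    (g * nmat z τ) 2 2 = g 2 2 + g 2 0 * ((τ:ℂ) * I - (normSq z : ℂ))
      - ((Real.sqrt 2:ℝ) : ℂ) * (starRingEnd ℂ z) * g 2 1 := by
  simp [Matrix.mul_apply, nmat, Fin.sum_univ_three, Matrix.vecHead, Matrix.vecTail]
  ring

lemma gmul_a20 {g : Matrix (Fin 3) (Fin 3) ℂ} (t : ℝ) :
    (g * amat t) 2 0 = g 2 0 * (Real.exp (t/2) : ℂ) := by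
  simp [Matrix.mul_apply, amat, Fin.sum_univ_three, Matrix.vecHead, Matrix.vecTail,
    -Complex.ofReal_exp]

lemma gmul_a21 {g : Matrix (Fin 3) (Fin 3) ℂ} (t : ℝ) :
    (g * amat t) 2 1 = g 2 1 := by
  simp [Matrix.mul_apply, amat, Fin.sum_univ_three, Matrix.vecHead, Matrix.vecTail]

lemma gmul_a22 {g : Matrix (Fin 3) (Fin 3) ℂ} (t : ℝ) :
    (g * amat t) 2 2 = g 2 2 * (Real.exp (-t/2) : ℂ) := by
  simp [Matrix.mul_apply, amat, Fin.sum_univ_three, Matrix.vecHead, Matrix.vecTail,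
    -Complex.ofReal_exp]

lemma sq2pow : (((Real.sqrt 2:ℝ)):ℂ)^2 = 2 := by rw [sq, sq2]

theorem derivatives_of_A_projection
    (AA : Matrix (Fin 3) (Fin 3) ℂ → ℝ)
    (κ : Matrix (Fin 3) (Fin 3) ℂ → Matrix (Fin 3) (Fin 3) ℂ)
    (hdec : ∀ g ∈ U21, κ g ∈ K0 ∧ ∃ n ∈ Nset, g = n * amat (AA g) * κ g)
    (huniq : ∀ n ∈ Nset, ∀ n' ∈ Nset, ∀ (t t' : ℝ), ∀ k ∈ K0, ∀ k' ∈ K0,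
      n * amat t * k = n' * amat t' * k' → t = t' ∧ k = k')
    (g : Matrix (Fin 3) (Fin 3) ℂ) (n₀ m : Matrix (Fin 3) (Fin 3) ℂ) (t₀ : ℝ) (α β : ℂ)
    (hg : g ∈ U21) (hn₀ : n₀ ∈ Nset) (hm : m ∈ Mset) (hαβ : normSq α + normSq β = 1)
    (hdecg : g = n₀ * amat t₀ * m * kmat α β) :
    deriv (fun t : ℝ => AA (g * amat t)) 0 = α.re ∧
    deriv (fun τ : ℝ => AA (g * nmat 0 τ)) 0 = α.im ∧
    deriv (fun x : ℝ => AA (g * nmat (x : ℂ) 0)) 0 = 2 * β.re ∧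
    deriv (fun y : ℝ => AA (g * nmat ((y : ℂ) * I) 0)) 0 = 2 * β.im := by
  clear huniq
  have hgen : ∃ c : ℂ, normSq c = Real.exp (-t₀) ∧ g 2 0 = c * ((α-1)/2) ∧
      g 2 1 = c * β * ((Real.sqrt 2:ℝ):ℂ) / 2 ∧ g 2 2 = c * ((α+1)/2) := by
    have hrow := g_row hdecg hn₀ hm
    refine ⟨(Real.exp (-t₀/2) : ℂ) * m 2 2, ?_, ?_, ?_, ?_⟩
    · rw [Complex.normSq_mul, Complex.normSq_ofReal, m22_normSq hm, mul_one, ← Real.exp_add]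
      congr 1; ring
    · rw [hrow 0]; simp [kmat]
    · have hk21 : kmat α β 2 1 = β / ((Real.sqrt 2:ℝ):ℂ) := by simp [kmat]
      have hs2ne : (((Real.sqrt 2:ℝ)):ℂ) ≠ 0 := by
        have : (0:ℝ) < Real.sqrt 2 := Real.sqrt_pos.2 (by norm_num)
        exact_mod_cast this.ne'
      have hdiv : (β / (((Real.sqrt 2:ℝ)):ℂ)) = β * ((Real.sqrt 2:ℝ):ℂ) / 2 := by
        field_simp
        linear_combination (-β) * sq2pow
      rw [hrow 1, hk21, hdiv]
      ring
    · rw [hrow 2]; simp [kmat]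
  obtain ⟨c, hc, hg20, hg21, hg22⟩ := hgen
  have hcpos : 0 < normSq c := by rw [hc]; exact Real.exp_pos _
  have hcc : ((normSq c : ℝ) : ℂ) = (starRingEnd ℂ) c * c := Complex.normSq_eq_conj_mul_self
  have h4 : ∀ w : ℂ, normSq (w/2) = normSq w / 4 := by
    intro w
    rw [show (2:ℂ) = ((2:ℝ):ℂ) by norm_num, Complex.normSq_div, Complex.normSq_ofReal]
    norm_num
  have hm1 : normSq (α - 1) = normSq α + 1 - 2 * α.re := by
    rw [Complex.normSq_sub]; simp
  have hp1 : normSq (α + 1) = normSq α + 1 + 2 * α.re := by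
    rw [Complex.normSq_add]; simp
  have hs2 : Real.sqrt 2 * Real.sqrt 2 = 2 := Real.mul_self_sqrt (by norm_num)
  have n0 : normSq (g 2 0) = normSq c * ((normSq α + 1 - 2 * α.re)/4) := by
    rw [hg20, Complex.normSq_mul, h4, hm1]
  have n1 : normSq (g 2 1) = normSq c * (normSq β / 2) := by
    rw [hg21, h4, Complex.normSq_mul, Complex.normSq_mul, Complex.normSq_ofReal, hs2]
    ring
  have n2 : normSq (g 2 2) = normSq c * ((normSq α + 1 + 2 * α.re)/4) := by
    rw [hg22, Complex.normSq_mul, h4, hp1]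
  have S0sum : normSq (g 2 0) + normSq (g 2 1) + normSq (g 2 2) = normSq c := by
    rw [n0, n1, n2]
    linear_combination (normSq c / 2) * hαβ
  have key : ∀ h ∈ U21, AA h = -Real.log (normSq (h 2 0) + normSq (h 2 1) + normSq (h 2 2)) := by
    intro h hh
    rw [← row2_formula AA κ hdec hh, Real.log_exp, neg_neg]
  refine ⟨?_, ?_, ?_, ?_⟩
  · -- t-family
    have key1 : (fun t : ℝ => AA (g * amat t)) = fun t =>
        -Real.log (normSq (g 2 0) * Real.exp t + normSq (g 2 1)
          + normSq (g 2 2) * Real.exp (-t)) := by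
      funext t
      rw [key _ (U21_mul hg (amat_mem t)), gmul_a20, gmul_a21, gmul_a22,
        Complex.normSq_mul, Complex.normSq_mul, Complex.normSq_ofReal, Complex.normSq_ofReal,
        ← Real.exp_add, ← Real.exp_add]
      norm_num
    have hS1 : HasDerivAt (fun t : ℝ => normSq (g 2 0) * Real.exp t + normSq (g 2 1)
        + normSq (g 2 2) * Real.exp (-t)) (normSq (g 2 0) - normSq (g 2 2)) 0 := by
      have h1 := (Real.hasDerivAt_exp 0).const_mul (normSq (g 2 0))
      have h3 : HasDerivAt (fun t : ℝ => Real.exp (-t)) (-1 : ℝ) 0 := by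
        simpa using (hasDerivAt_neg (0:ℝ)).exp
      have h5 := (h1.add_const (normSq (g 2 1))).add (h3.const_mul (normSq (g 2 2)))
      refine h5.congr_deriv ?_
      simp; ring
    have hne : normSq (g 2 0) * Real.exp (0:ℝ) + normSq (g 2 1)
        + normSq (g 2 2) * Real.exp (-(0:ℝ)) ≠ 0 := by
      simp only [Real.exp_zero, neg_zero, mul_one]
      rw [S0sum]; exact hcpos.ne'
    have hd := ((hS1.log hne).neg).deriv
    simp only [Pi.neg_def] at hd
    rw [key1, hd]
    simp only [Real.exp_zero, neg_zero, mul_one]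
    rw [S0sum, n0, n2]
    field_simp
    ring
  · -- τ-family
    have key2 : (fun τ : ℝ => AA (g * nmat 0 τ)) = fun τ : ℝ =>
        -Real.log (normSq (g 2 0) + normSq (g 2 1)
          + normSq (g 2 2 + ((τ:ℝ):ℂ) * (I * g 2 0))) := by
      funext τ
      rw [key _ (U21_mul hg (nmat_mem 0 τ)), gmul_n20, gmul_n21, gmul_n22]
      have e1 : g 2 1 + ((Real.sqrt 2:ℝ):ℂ) * 0 * g 2 0 = g 2 1 := by ring
      have e2 : g 2 2 + g 2 0 * (((τ:ℝ):ℂ) * I - ((normSq (0:ℂ) : ℝ):ℂ))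
          - ((Real.sqrt 2:ℝ):ℂ) * (starRingEnd ℂ) (0:ℂ) * g 2 1
          = g 2 2 + ((τ:ℝ):ℂ) * (I * g 2 0) := by
        simp only [Complex.normSq_zero, Complex.ofReal_zero, map_zero, sub_zero, mul_zero,
          zero_mul]
        ring
      rw [e1, e2]
    have hf : HasDerivAt (fun τ : ℝ => g 2 2 + (τ:ℂ) * (I * g 2 0)) (I * g 2 0) 0 := by
      simpa using ((hasDerivAt_ofReal 0).mul_const (I * g 2 0)).const_add (g 2 2)
    have hS2 : HasDerivAt (fun τ : ℝ => normSq (g 2 0) + normSq (g 2 1)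
        + normSq (g 2 2 + (τ:ℂ) * (I * g 2 0)))
        (2 * ((starRingEnd ℂ) (g 2 2) * (I * g 2 0)).re) 0 := by
      have h := (hasDerivAt_const (0:ℝ) (normSq (g 2 0) + normSq (g 2 1))).add
        (hasDerivAt_normSq hf)
      simpa [Pi.add_def] using h
    have hne2 : normSq (g 2 0) + normSq (g 2 1)
        + normSq (g 2 2 + ((0:ℝ):ℂ) * (I * g 2 0)) ≠ 0 := by
      simp only [Complex.ofReal_zero, zero_mul, add_zero]
      rw [S0sum]; exact hcpos.ne'
    have hd := ((hS2.log hne2).neg).deriv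
    simp only [Pi.neg_def] at hd
    rw [key2, hd]
    simp only [Complex.ofReal_zero, zero_mul, add_zero]
    rw [S0sum]
    have hw : (starRingEnd ℂ) (g 2 2) * (I * g 2 0)
        = ((normSq c / 4 : ℝ):ℂ) * (I * ((starRingEnd ℂ) (α+1)) * (α-1)) := by
      rw [hg20, hg22, _root_.map_mul, map_div₀, (map_ofNat (starRingEnd ℂ) 2 : (starRingEnd ℂ) (2:ℂ) = 2),
        Complex.ofReal_div]
      push_cast
      linear_combination (-(I * ((starRingEnd ℂ) (α+1)) * (α-1)) / 4) * hcc
    rw [hw, Complex.re_ofReal_mul]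
    simp only [Complex.mul_re, Complex.mul_im, Complex.conj_re, Complex.conj_im, Complex.sub_re,
      Complex.sub_im, Complex.add_re, Complex.add_im, Complex.one_re, Complex.one_im,
      Complex.I_re, Complex.I_im]
    field_simp
    ring
  · -- x-family
    have key3 : (fun x : ℝ => AA (g * nmat (x:ℂ) 0)) = fun x : ℝ =>
        -Real.log (normSq (g 2 0)
          + normSq (g 2 1 + (x:ℂ) * (((Real.sqrt 2:ℝ):ℂ) * g 2 0))
          + normSq (g 2 2 + (x:ℂ) * (-((Real.sqrt 2:ℝ):ℂ) * g 2 1)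
              + ((x:ℂ) * (x:ℂ)) * (-(g 2 0)))) := by
      funext x
      rw [key _ (U21_mul hg (nmat_mem (x:ℂ) 0)), gmul_n20, gmul_n21, gmul_n22]
      have e1 : g 2 1 + ((Real.sqrt 2:ℝ):ℂ) * (x:ℂ) * g 2 0
          = g 2 1 + (x:ℂ) * (((Real.sqrt 2:ℝ):ℂ) * g 2 0) := by ring
      have e2 : g 2 2 + g 2 0 * (((0:ℝ):ℂ) * I - ((normSq ((x:ℝ):ℂ) : ℝ):ℂ))
          - ((Real.sqrt 2:ℝ):ℂ) * (starRingEnd ℂ) ((x:ℝ):ℂ) * g 2 1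
          = g 2 2 + (x:ℂ) * (-((Real.sqrt 2:ℝ):ℂ) * g 2 1) + ((x:ℂ) * (x:ℂ)) * (-(g 2 0)) := by
        simp only [Complex.normSq_ofReal, Complex.conj_ofReal, Complex.ofReal_zero, zero_mul,
          Complex.ofReal_mul]
        ring
      rw [e1, e2]
    have hf2 : HasDerivAt (fun x : ℝ => g 2 1 + (x:ℂ) * (((Real.sqrt 2:ℝ):ℂ) * g 2 0))
        (((Real.sqrt 2:ℝ):ℂ) * g 2 0) 0 := by
      simpa using ((hasDerivAt_ofReal 0).mul_const (((Real.sqrt 2:ℝ):ℂ) * g 2 0)).const_add (g 2 1)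
    have hf3 : HasDerivAt (fun x : ℝ => g 2 2 + (x:ℂ) * (-((Real.sqrt 2:ℝ):ℂ) * g 2 1)
        + ((x:ℂ) * (x:ℂ)) * (-(g 2 0))) (-((Real.sqrt 2:ℝ):ℂ) * g 2 1) 0 := by
      have ha := ((hasDerivAt_ofReal 0).mul_const (-((Real.sqrt 2:ℝ):ℂ) * g 2 1)).const_add (g 2 2)
      have hb := ((hasDerivAt_ofReal 0).mul (hasDerivAt_ofReal 0)).mul_const (-(g 2 0))
      have h := ha.add hb
      simpa [Pi.add_def] using h
    have hS3 : HasDerivAt (fun x : ℝ => normSq (g 2 0)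
        + normSq (g 2 1 + (x:ℂ) * (((Real.sqrt 2:ℝ):ℂ) * g 2 0))
        + normSq (g 2 2 + (x:ℂ) * (-((Real.sqrt 2:ℝ):ℂ) * g 2 1) + ((x:ℂ) * (x:ℂ)) * (-(g 2 0))))
        (2 * ((starRingEnd ℂ) (g 2 1) * (((Real.sqrt 2:ℝ):ℂ) * g 2 0)).re
          + 2 * ((starRingEnd ℂ) (g 2 2) * (-((Real.sqrt 2:ℝ):ℂ) * g 2 1)).re) 0 := by
      have h := ((hasDerivAt_const (0:ℝ) (normSq (g 2 0))).add (hasDerivAt_normSq hf2)).add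
        (hasDerivAt_normSq hf3)
      simpa [Pi.add_def] using h
    have hne3 : normSq (g 2 0)
        + normSq (g 2 1 + ((0:ℝ):ℂ) * (((Real.sqrt 2:ℝ):ℂ) * g 2 0))
        + normSq (g 2 2 + ((0:ℝ):ℂ) * (-((Real.sqrt 2:ℝ):ℂ) * g 2 1)
            + (((0:ℝ):ℂ) * ((0:ℝ):ℂ)) * (-(g 2 0))) ≠ 0 := by
      simp only [Complex.ofReal_zero, zero_mul, add_zero, ne_eq, zero_pow, OfNat.ofNat_ne_zero,
        not_false_eq_true]
      rw [S0sum]; exact hcpos.ne'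
    have hd := ((hS3.log hne3).neg).deriv
    simp only [Pi.neg_def] at hd
    rw [key3, hd]
    simp only [Complex.ofReal_zero, zero_mul, add_zero, zero_pow, OfNat.ofNat_ne_zero,
      not_false_eq_true]
    rw [S0sum]
    have hw1 : (starRingEnd ℂ) (g 2 1) * (((Real.sqrt 2:ℝ):ℂ) * g 2 0)
        = ((normSq c / 2 : ℝ):ℂ) * ((starRingEnd ℂ) β * (α-1)) := by
      rw [hg20, hg21, map_div₀, _root_.map_mul, _root_.map_mul, Complex.conj_ofReal,
        (map_ofNat (starRingEnd ℂ) 2 : (starRingEnd ℂ) (2:ℂ) = 2), Complex.ofReal_div]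
      push_cast
      linear_combination ((starRingEnd ℂ) β * (α-1) * ((starRingEnd ℂ) c * c) / 4) * sq2
        + (-((starRingEnd ℂ) β * (α-1)) / 2) * hcc
    have hw2 : (starRingEnd ℂ) (g 2 2) * (-((Real.sqrt 2:ℝ):ℂ) * g 2 1)
        = ((normSq c / 2 : ℝ):ℂ) * (-((starRingEnd ℂ) (α+1) * β)) := by
      rw [hg21, hg22, _root_.map_mul, map_div₀, (map_ofNat (starRingEnd ℂ) 2 : (starRingEnd ℂ) (2:ℂ) = 2),
        Complex.ofReal_div]
      push_cast
      linear_combination (-((starRingEnd ℂ) (α+1) * β * ((starRingEnd ℂ) c * c)) / 4) * sq2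
        + (((starRingEnd ℂ) (α+1) * β) / 2) * hcc
    rw [hw1, hw2, Complex.re_ofReal_mul, Complex.re_ofReal_mul]
    simp only [Complex.mul_re, Complex.mul_im, Complex.conj_re, Complex.conj_im, Complex.sub_re,
      Complex.sub_im, Complex.add_re, Complex.add_im, Complex.one_re, Complex.one_im,
      Complex.neg_re, Complex.neg_im]
    field_simp
    ring
  · -- y-family
    have key4 : (fun y : ℝ => AA (g * nmat ((y:ℂ) * I) 0)) = fun y : ℝ =>
        -Real.log (normSq (g 2 0)
          + normSq (g 2 1 + (y:ℂ) * (((Real.sqrt 2:ℝ):ℂ) * (I * g 2 0)))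
          + normSq (g 2 2 + (y:ℂ) * (((Real.sqrt 2:ℝ):ℂ) * (I * g 2 1))
              + ((y:ℂ) * (y:ℂ)) * (-(g 2 0)))) := by
      funext y
      rw [key _ (U21_mul hg (nmat_mem ((y:ℂ) * I) 0)), gmul_n20, gmul_n21, gmul_n22]
      have e1 : g 2 1 + ((Real.sqrt 2:ℝ):ℂ) * ((y:ℂ) * I) * g 2 0
          = g 2 1 + (y:ℂ) * (((Real.sqrt 2:ℝ):ℂ) * (I * g 2 0)) := by ring
      have e2 : g 2 2 + g 2 0 * (((0:ℝ):ℂ) * I - ((normSq ((y:ℂ) * I) : ℝ):ℂ))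
          - ((Real.sqrt 2:ℝ):ℂ) * (starRingEnd ℂ) ((y:ℂ) * I) * g 2 1
          = g 2 2 + (y:ℂ) * (((Real.sqrt 2:ℝ):ℂ) * (I * g 2 1)) + ((y:ℂ) * (y:ℂ)) * (-(g 2 0)) := by
        simp only [Complex.normSq_mul, Complex.normSq_I, Complex.normSq_ofReal, mul_one,
          _root_.map_mul, Complex.conj_ofReal, Complex.conj_I, Complex.ofReal_zero, zero_mul,
          Complex.ofReal_mul]
        ring
      rw [e1, e2]
    have hf2 : HasDerivAt (fun y : ℝ => g 2 1 + (y:ℂ) * (((Real.sqrt 2:ℝ):ℂ) * (I * g 2 0)))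
        (((Real.sqrt 2:ℝ):ℂ) * (I * g 2 0)) 0 := by
      simpa using ((hasDerivAt_ofReal 0).mul_const
        (((Real.sqrt 2:ℝ):ℂ) * (I * g 2 0))).const_add (g 2 1)
    have hf3 : HasDerivAt (fun y : ℝ => g 2 2 + (y:ℂ) * (((Real.sqrt 2:ℝ):ℂ) * (I * g 2 1))
        + ((y:ℂ) * (y:ℂ)) * (-(g 2 0))) (((Real.sqrt 2:ℝ):ℂ) * (I * g 2 1)) 0 := by
      have ha := ((hasDerivAt_ofReal 0).mul_const
        (((Real.sqrt 2:ℝ):ℂ) * (I * g 2 1))).const_add (g 2 2)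
      have hb := ((hasDerivAt_ofReal 0).mul (hasDerivAt_ofReal 0)).mul_const (-(g 2 0))
      have h := ha.add hb
      simpa [Pi.add_def] using h
    have hS4 : HasDerivAt (fun y : ℝ => normSq (g 2 0)
        + normSq (g 2 1 + (y:ℂ) * (((Real.sqrt 2:ℝ):ℂ) * (I * g 2 0)))
        + normSq (g 2 2 + (y:ℂ) * (((Real.sqrt 2:ℝ):ℂ) * (I * g 2 1)) + ((y:ℂ) * (y:ℂ)) * (-(g 2 0))))
        (2 * ((starRingEnd ℂ) (g 2 1) * (((Real.sqrt 2:ℝ):ℂ) * (I * g 2 0))).re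
          + 2 * ((starRingEnd ℂ) (g 2 2) * (((Real.sqrt 2:ℝ):ℂ) * (I * g 2 1))).re) 0 := by
      have h := ((hasDerivAt_const (0:ℝ) (normSq (g 2 0))).add (hasDerivAt_normSq hf2)).add
        (hasDerivAt_normSq hf3)
      simpa [Pi.add_def] using h
    have hne4 : normSq (g 2 0)
        + normSq (g 2 1 + ((0:ℝ):ℂ) * (((Real.sqrt 2:ℝ):ℂ) * (I * g 2 0)))
        + normSq (g 2 2 + ((0:ℝ):ℂ) * (((Real.sqrt 2:ℝ):ℂ) * (I * g 2 1))
            + (((0:ℝ):ℂ) * ((0:ℝ):ℂ)) * (-(g 2 0))) ≠ 0 := by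
      simp only [Complex.ofReal_zero, zero_mul, add_zero, ne_eq, zero_pow, OfNat.ofNat_ne_zero,
        not_false_eq_true]
      rw [S0sum]; exact hcpos.ne'
    have hd := ((hS4.log hne4).neg).deriv
    simp only [Pi.neg_def] at hd
    rw [key4, hd]
    simp only [Complex.ofReal_zero, zero_mul, add_zero, zero_pow, OfNat.ofNat_ne_zero,
      not_false_eq_true]
    rw [S0sum]
    have hw1 : (starRingEnd ℂ) (g 2 1) * (((Real.sqrt 2:ℝ):ℂ) * (I * g 2 0))
        = ((normSq c / 2 : ℝ):ℂ) * (I * ((starRingEnd ℂ) β * (α-1))) := by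
      rw [hg20, hg21, map_div₀, _root_.map_mul, _root_.map_mul, Complex.conj_ofReal,
        (map_ofNat (starRingEnd ℂ) 2 : (starRingEnd ℂ) (2:ℂ) = 2), Complex.ofReal_div]
      push_cast
      linear_combination (I * (starRingEnd ℂ) β * (α-1) * ((starRingEnd ℂ) c * c) / 4) * sq2
        + (-(I * (starRingEnd ℂ) β * (α-1)) / 2) * hcc
    have hw2 : (starRingEnd ℂ) (g 2 2) * (((Real.sqrt 2:ℝ):ℂ) * (I * g 2 1))
        = ((normSq c / 2 : ℝ):ℂ) * (I * ((starRingEnd ℂ) (α+1) * β)) := by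
      rw [hg21, hg22, _root_.map_mul, map_div₀, (map_ofNat (starRingEnd ℂ) 2 : (starRingEnd ℂ) (2:ℂ) = 2),
        Complex.ofReal_div]
      push_cast
      linear_combination (I * (starRingEnd ℂ) (α+1) * β * ((starRingEnd ℂ) c * c) / 4) * sq2
        + (-(I * (starRingEnd ℂ) (α+1) * β) / 2) * hcc
    rw [hw1, hw2, Complex.re_ofReal_mul, Complex.re_ofReal_mul]
    simp only [Complex.mul_re, Complex.mul_im, Complex.conj_re, Complex.conj_im, Complex.sub_re,
      Complex.sub_im, Complex.add_re, Complex.add_im, Complex.one_re, Complex.one_im,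
      Complex.I_re, Complex.I_im]
    field_simp
    ring

end
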